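/- Let τ be a finite measure on a Borel space X, and let (f_n) be a sequence of positive functions in L^1(τ) such that both f_n → 1 and 1/f_n → 1 in L^1(τ). Then there is a subsequence (f_{n_i}) such that ∫ |log f_{n_i}| dτ → 0; in particular exp(∫ log f_{n_i} dτ) → 1. -/

import Mathlib

open MeasureTheory Filter Topology Real

lemma abs_log_le_aux {t : ℝ} (ht : 0 < t) : |Real.log t| ≤ |t - 1| + |t⁻¹ - 1| := by
  have h1 : Real.log t ≤ t - 1 := Real.log_le_sub_one_of_pos ht
  have h2 : Real.log t⁻¹ ≤ t⁻¹ - 1 := Real.log_le_sub_one_of_pos (by positivity)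
  rw [Real.log_inv] at h2
  rw [abs_le]
  constructor
  · nlinarith [abs_nonneg (t - 1), le_abs_self (t⁻¹ - 1)]
  · nlinarith [abs_nonneg (t⁻¹ - 1), le_abs_self (t - 1)]

/-- Let `τ` be a finite measure, and `(f_n)` a sequence of a.e. positive
functions with `f_n, 1/f_n ∈ L¹(τ)` and `f_n → 1`, `1/f_n → 1` in `L¹(τ)`. Then some
subsequence satisfies `∫ |log f_{n_i}| dτ → 0`; in particular
`exp (∫ log f_{n_i} dτ) → 1`. -/
theorem mahler_tendsto_one_of_L1
    {X : Type*} [MeasurableSpace X] (τ : Measure X) [IsFiniteMeasure τ]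
    (f : ℕ → X → ℝ)
    (hf_pos : ∀ n, ∀ᵐ x ∂τ, 0 < f n x)
    (hf_int : ∀ n, Integrable (f n) τ)
    (hinv_int : ∀ n, Integrable (fun x => (f n x)⁻¹) τ)
    (hf_L1 : Tendsto (fun n => ∫ x, |f n x - 1| ∂τ) atTop (𝓝 0))
    (hinv_L1 : Tendsto (fun n => ∫ x, |(f n x)⁻¹ - 1| ∂τ) atTop (𝓝 0)) :
    ∃ φ : ℕ → ℕ, StrictMono φ ∧
      Tendsto (fun i => ∫ x, |Real.log (f (φ i) x)| ∂τ) atTop (𝓝 0) ∧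
      Tendsto (fun i => Real.exp (∫ x, Real.log (f (φ i) x) ∂τ)) atTop (𝓝 1) := by
  -- dominating functions
  have hg_int : ∀ n, Integrable (fun x => |f n x - 1| + |(f n x)⁻¹ - 1|) τ :=
    fun n => (((hf_int n).sub (integrable_const 1)).abs.add
      ((hinv_int n).sub (integrable_const 1)).abs)
  have hbound : ∀ n, ∀ᵐ x ∂τ, |Real.log (f n x)| ≤ |f n x - 1| + |(f n x)⁻¹ - 1| := by
    intro n
    filter_upwards [hf_pos n] with x hx using abs_log_le_aux hx
  have hlog_meas : ∀ n, AEStronglyMeasurable (fun x => Real.log (f n x)) τ := fun n =>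
    (Real.measurable_log.comp_aemeasurable (hf_int n).aemeasurable).aestronglyMeasurable
  have hlog_int : ∀ n, Integrable (fun x => Real.log (f n x)) τ := by
    intro n
    refine (hg_int n).mono (hlog_meas n) ?_
    filter_upwards [hbound n] with x hx
    simpa [abs_of_nonneg (by positivity : (0:ℝ) ≤ |f n x - 1| + |(f n x)⁻¹ - 1|)] using hx
  have habs_int : ∀ n, Integrable (fun x => |Real.log (f n x)|) τ := fun n => (hlog_int n).abs
  -- ∫ |log f n| → 0
  have key : Tendsto (fun n => ∫ x, |Real.log (f n x)| ∂τ) atTop (𝓝 0) := by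
    have hsum : Tendsto (fun n => (∫ x, |f n x - 1| ∂τ) + ∫ x, |(f n x)⁻¹ - 1| ∂τ)
        atTop (𝓝 0) := by simpa using hf_L1.add hinv_L1
    refine squeeze_zero (fun n => integral_nonneg fun x => abs_nonneg _) (fun n => ?_) hsum
    exact le_of_le_of_eq (integral_mono_ae (habs_int n) (hg_int n) (hbound n))
      (integral_add ((hf_int n).sub (integrable_const 1)).abs
        ((hinv_int n).sub (integrable_const 1)).abs)
  refine ⟨id, strictMono_id, key, ?_⟩
  have h0 : Tendsto (fun n => ∫ x, Real.log (f n x) ∂τ) atTop (𝓝 0) := by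
    refine squeeze_zero_norm (fun n => ?_) key
    simpa using norm_integral_le_integral_norm (μ := τ) (fun x => Real.log (f n x))
  simpa [Function.comp_def] using (Real.continuous_exp.continuousAt.tendsto.comp h0)
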